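/- Let X have distribution Π on the matrix completion basis 𝒳 with √(c₁/(m₁m₂)) ≤ κ₁ ≤ κ₁' ≤ √(c₁'/(m₁m₂)). Then max{‖E(X)‖∞, ‖E(X)ᵀ‖∞} ≤ √(c₁'/(m₁m₂)), and the quantity σ_X² = max{‖E(XXᵀ)‖∞, ‖E(XᵀX)‖∞} satisfies c₁/(m₁∧m₂) ≤ σ_X² ≤ c₁'/(m₁∧m₂). -/

import Mathlib

open MeasureTheory ProbabilityTheory Matrix Real

noncomputable section

namespace MC

instance matMeasurableSpace {m n : Type*} : MeasurableSpace (Matrix m n ℝ) :=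
  inferInstanceAs (MeasurableSpace (m → n → ℝ))

/-- Trace inner product `⟨A,B⟩ = tr(Aᵀ B)`. -/
def mip {m₁ m₂ : ℕ} (A B : Matrix (Fin m₁) (Fin m₂) ℝ) : ℝ := (Aᵀ * B).trace

/-- Frobenius norm `‖A‖₂`. -/
def frob {m₁ m₂ : ℕ} (A : Matrix (Fin m₁) (Fin m₂) ℝ) : ℝ :=
  Real.sqrt (∑ i, ∑ j, (A i j) ^ 2)

/-- Euclidean norm of a vector. -/
def evnorm {m : ℕ} (v : Fin m → ℝ) : ℝ := Real.sqrt (∑ i, (v i) ^ 2)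

/-- Spectral norm `‖A‖_∞` (largest singular value), as the `ℓ₂ → ℓ₂` operator norm. -/
def spec {m₁ m₂ : ℕ} (A : Matrix (Fin m₁) (Fin m₂) ℝ) : ℝ :=
  sSup {r | ∃ x : Fin m₂ → ℝ, evnorm x ≤ 1 ∧ r = evnorm (A.mulVec x)}

/-- Nuclear norm `‖A‖₁` (sum of singular values), via trace duality with the spectral norm. -/
def nuc {m₁ m₂ : ℕ} (A : Matrix (Fin m₁) (Fin m₂) ℝ) : ℝ :=
  sSup {r | ∃ B : Matrix (Fin m₁) (Fin m₂) ℝ, spec B ≤ 1 ∧ r = mip A B}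

/-- The matrix completion basis `𝒳 = {e_j(m₁) e_k(m₂)ᵀ}`. -/
def mcBasis (m₁ m₂ : ℕ) : Set (Matrix (Fin m₁) (Fin m₂) ℝ) :=
  {M | ∃ j k, M = Matrix.single j k (1 : ℝ)}

/-- `⟨A,B⟩_{L₂(Pdist)} = E[⟨A,X⟩⟨B,X⟩]` for `X ~ Pdist`. -/
def ipL2Pi {m₁ m₂ : ℕ} (Pdist : Measure (Matrix (Fin m₁) (Fin m₂) ℝ))
    (A B : Matrix (Fin m₁) (Fin m₂) ℝ) : ℝ :=
  ∫ M, mip A M * mip B M ∂Pdist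

/-- `‖A‖²_{L₂(Pdist)} = E[⟨A,X⟩²]` for `X ~ Pdist`. -/
def nl2sqPi {m₁ m₂ : ℕ} (Pdist : Measure (Matrix (Fin m₁) (Fin m₂) ℝ))
    (A : Matrix (Fin m₁) (Fin m₂) ℝ) : ℝ :=
  ipL2Pi Pdist A A

/-- `κ₁(Pdist) = inf{‖B‖_{L₂(Pdist)} : ‖B‖₂ = 1, rank(B) ≤ 1}`. -/
def kappa1Pi {m₁ m₂ : ℕ} (Pdist : Measure (Matrix (Fin m₁) (Fin m₂) ℝ)) : ℝ :=
  sInf {r | ∃ B : Matrix (Fin m₁) (Fin m₂) ℝ,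
    frob B = 1 ∧ B.rank ≤ 1 ∧ r = Real.sqrt (nl2sqPi Pdist B)}

/-- `κ₁'(Pdist) = sup{‖B‖_{L₂(Pdist)} : ‖B‖₂ = 1, rank(B) ≤ 1}`. -/
def kappa1'Pi {m₁ m₂ : ℕ} (Pdist : Measure (Matrix (Fin m₁) (Fin m₂) ℝ)) : ℝ :=
  sSup {r | ∃ B : Matrix (Fin m₁) (Fin m₂) ℝ,
    frob B = 1 ∧ B.rank ≤ 1 ∧ r = Real.sqrt (nl2sqPi Pdist B)}

/-- The coherence `ρ(Pdist)`. -/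
def rhoPi {m₁ m₂ : ℕ} (Pdist : Measure (Matrix (Fin m₁) (Fin m₂) ℝ)) : ℝ :=
  sSup {r | ∃ A B : Matrix (Fin m₁) (Fin m₂) ℝ, A ≠ 0 ∧ B ≠ 0 ∧ mip A B = 0 ∧
    r = |ipL2Pi Pdist A B| / (nuc A * nuc B)}

/-- Entrywise expectation `E[f(X)]` for `X ~ Pdist`. -/
def mEPi {m₁ m₂ k l : ℕ} (Pdist : Measure (Matrix (Fin m₁) (Fin m₂) ℝ))
    (f : Matrix (Fin m₁) (Fin m₂) ℝ → Matrix (Fin k) (Fin l) ℝ) : Matrix (Fin k) (Fin l) ℝ :=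
  fun i j => ∫ M, f M i j ∂Pdist

/-! ### Auxiliary material -/

instance matMSC {m n : Type*} [Countable m] [Countable n] :
    MeasurableSingletonClass (Matrix m n ℝ) :=
  inferInstanceAs (MeasurableSingletonClass (m → n → ℝ))

/-- Abbreviation for the basis matrices. -/
def bm {m₁ m₂ : ℕ} (j : Fin m₁) (k : Fin m₂) : Matrix (Fin m₁) (Fin m₂) ℝ :=
  Matrix.single j k 1

lemma bm_apply {m₁ m₂ : ℕ} (j : Fin m₁) (k : Fin m₂) (a b) :
    bm j k a b = if j = a ∧ k = b then (1:ℝ) else 0 := rfl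

lemma bm_inj {m₁ m₂ : ℕ} : Function.Injective
    (fun p : Fin m₁ × Fin m₂ => bm p.1 p.2) := by
  rintro ⟨j, k⟩ ⟨j', k'⟩ h
  have := congrFun (congrFun h j) k
  simp only [bm_apply, and_self, if_true] at this
  by_contra hne
  rw [if_neg] at this
  · exact one_ne_zero this
  · rintro ⟨rfl, rfl⟩; exact hne rfl

lemma mip_eq_sum {m₁ m₂ : ℕ} (A B : Matrix (Fin m₁) (Fin m₂) ℝ) :
    mip A B = ∑ i, ∑ j, A i j * B i j := by
  rw [mip, Matrix.trace]
  simp only [Matrix.diag_apply, Matrix.mul_apply, Matrix.transpose_apply]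
  exact Finset.sum_comm

lemma mip_bm {m₁ m₂ : ℕ} (B : Matrix (Fin m₁) (Fin m₂) ℝ) (j : Fin m₁) (k : Fin m₂) :
    mip B (bm j k) = B j k := by
  rw [mip_eq_sum]
  simp [bm_apply, ite_and, mul_ite, Finset.sum_ite_eq]

/-- The support as a finset. -/
def bms (m₁ m₂ : ℕ) : Finset (Matrix (Fin m₁) (Fin m₂) ℝ) :=
  Finset.image (fun p : Fin m₁ × Fin m₂ => bm p.1 p.2) Finset.univ

lemma coe_bms (m₁ m₂ : ℕ) : (bms m₁ m₂ : Set (Matrix (Fin m₁) (Fin m₂) ℝ)) = mcBasis m₁ m₂ := by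
  ext M
  simp only [bms, Finset.coe_image, Finset.coe_univ, Set.image_univ, Set.mem_range, mcBasis,
    Set.mem_setOf_eq, Prod.exists]
  constructor
  · rintro ⟨j, k, rfl⟩; exact ⟨j, k, rfl⟩
  · rintro ⟨j, k, rfl⟩; exact ⟨j, k, rfl⟩

section IntegralSum

variable {m₁ m₂ : ℕ} (Pdist : Measure (Matrix (Fin m₁) (Fin m₂) ℝ)) [IsProbabilityMeasure Pdist]

lemma integral_eq_sum (hsupp : Pdist (mcBasis m₁ m₂) = 1)
    (f : Matrix (Fin m₁) (Fin m₂) ℝ → ℝ) :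
    ∫ M, f M ∂Pdist = ∑ j, ∑ k, (Pdist {bm j k}).toReal * f (bm j k) := by
  have hms : MeasurableSet (mcBasis m₁ m₂) := by
    rw [← coe_bms]; exact (bms m₁ m₂).measurableSet
  have hae : ∀ᵐ x ∂Pdist, x ∈ (bms m₁ m₂ : Set (Matrix (Fin m₁) (Fin m₂) ℝ)) := by
    rw [coe_bms]
    rw [ae_iff]
    have : {x | ¬ x ∈ mcBasis m₁ m₂} = (mcBasis m₁ m₂)ᶜ := rfl
    rw [this, measure_compl hms (by simp), hsupp, measure_univ, tsub_self]
  have hres : Pdist.restrict (bms m₁ m₂ : Set (Matrix (Fin m₁) (Fin m₂) ℝ)) = Pdist :=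
    Measure.restrict_eq_self_of_ae_mem hae
  calc ∫ M, f M ∂Pdist = ∫ M in (bms m₁ m₂ : Set _), f M ∂Pdist := by rw [hres]
    _ = ∑ x ∈ bms m₁ m₂, (Pdist {x}).toReal • f x :=
        integral_finset _ IntegrableOn.finset
    _ = ∑ p : Fin m₁ × Fin m₂, (Pdist {bm p.1 p.2}).toReal • f (bm p.1 p.2) := by
        rw [bms, Finset.sum_image (fun a _ b _ h => bm_inj h)]
    _ = ∑ j, ∑ k, (Pdist {bm j k}).toReal * f (bm j k) := by
        rw [Fintype.sum_prod_type]; simp [smul_eq_mul]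

/-- The point probabilities. -/
def pe (j : Fin m₁) (k : Fin m₂) : ℝ := (Pdist {bm j k}).toReal

lemma pe_nonneg (j k) : 0 ≤ pe Pdist j k := ENNReal.toReal_nonneg

lemma pe_le_one (j k) : pe Pdist j k ≤ 1 := by
  rw [pe, ← ENNReal.toReal_one]
  exact ENNReal.toReal_mono ENNReal.one_ne_top prob_le_one

lemma sum_pe (hsupp : Pdist (mcBasis m₁ m₂) = 1) :
    ∑ j, ∑ k, pe Pdist j k = 1 := by
  have := integral_eq_sum Pdist hsupp (fun _ => (1:ℝ))
  simpa [pe] using this.symm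

lemma nl2sq_eq (hsupp : Pdist (mcBasis m₁ m₂) = 1) (B : Matrix (Fin m₁) (Fin m₂) ℝ) :
    nl2sqPi Pdist B = ∑ j, ∑ k, pe Pdist j k * (B j k) ^ 2 := by
  rw [nl2sqPi, ipL2Pi, integral_eq_sum Pdist hsupp]
  simp [mip_bm, pe, sq]

end IntegralSum

/-! ### Rank and Frobenius facts about basis matrices -/

lemma frob_bm {m₁ m₂ : ℕ} (j : Fin m₁) (k : Fin m₂) : frob (bm j k) = 1 := by
  rw [frob]
  have : ∑ a, ∑ b, (bm j k a b) ^ 2 = 1 := by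
    simp [bm_apply, ite_and, apply_ite (fun x : ℝ => x ^ 2), Finset.sum_ite_eq]
  rw [this, Real.sqrt_one]

lemma rank_bm {m₁ m₂ : ℕ} (j : Fin m₁) (k : Fin m₂) : (bm j k).rank ≤ 1 := by
  classical
  rw [Matrix.rank]
  have hle : LinearMap.range (bm j k).mulVecLin ≤
      Submodule.span ℝ {(Pi.single j 1 : Fin m₁ → ℝ)} := by
    rintro v ⟨x, rfl⟩
    have : (bm j k).mulVec x = x k • (Pi.single j 1 : Fin m₁ → ℝ) := by
      ext a
      simp [Matrix.mulVec, dotProduct, bm_apply, ite_and, mul_ite, ite_mul,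
        Pi.single_apply, Finset.sum_ite_eq, eq_comm, mul_comm]
    rw [Matrix.mulVecLin_apply, this]
    exact Submodule.smul_mem _ _ (Submodule.mem_span_singleton_self _)
  calc Module.finrank ℝ ↥(LinearMap.range (bm j k).mulVecLin)
      ≤ Module.finrank ℝ ↥(Submodule.span ℝ {(Pi.single j 1 : Fin m₁ → ℝ)}) :=
        Submodule.finrank_mono hle
    _ ≤ 1 := by
        have hv : (Pi.single j 1 : Fin m₁ → ℝ) ≠ 0 := by
          intro h
          have := congrFun h j
          simp at this
        exact le_of_eq (finrank_span_singleton hv)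

/-! ### Spectral norm facts -/

lemma evnorm_nonneg {n : ℕ} (v : Fin n → ℝ) : 0 ≤ evnorm v := Real.sqrt_nonneg _

lemma sq_sum_le_one {n : ℕ} {v : Fin n → ℝ} (h : evnorm v ≤ 1) : ∑ i, (v i) ^ 2 ≤ 1 := by
  rw [evnorm] at h
  have h0 : (0:ℝ) ≤ ∑ i, (v i) ^ 2 := Finset.sum_nonneg fun i _ => sq_nonneg _
  nlinarith [Real.sq_sqrt h0, Real.sqrt_nonneg (∑ i, (v i) ^ 2)]

lemma evnorm_mulVec_le_frob {n₁ n₂ : ℕ} (A : Matrix (Fin n₁) (Fin n₂) ℝ) (x : Fin n₂ → ℝ)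
    (hx : evnorm x ≤ 1) : evnorm (A.mulVec x) ≤ frob A := by
  have hx2 := sq_sum_le_one hx
  rw [evnorm, frob]
  apply Real.sqrt_le_sqrt
  calc ∑ i, (A.mulVec x i) ^ 2
      ≤ ∑ i, (∑ j, (A i j) ^ 2) * (∑ j, (x j) ^ 2) := by
        apply Finset.sum_le_sum
        intro i _
        have : A.mulVec x i = ∑ j, A i j * x j := rfl
        rw [this]
        exact Finset.sum_mul_sq_le_sq_mul_sq _ _ _
    _ ≤ ∑ i, (∑ j, (A i j) ^ 2) * 1 := by
        apply Finset.sum_le_sum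
        intro i _
        exact mul_le_mul_of_nonneg_left hx2 (Finset.sum_nonneg fun j _ => sq_nonneg _)
    _ = ∑ i, ∑ j, (A i j) ^ 2 := by simp

lemma spec_bddAbove {n₁ n₂ : ℕ} (A : Matrix (Fin n₁) (Fin n₂) ℝ) :
    BddAbove {r | ∃ x : Fin n₂ → ℝ, evnorm x ≤ 1 ∧ r = evnorm (A.mulVec x)} := by
  refine ⟨frob A, ?_⟩
  rintro r ⟨x, hx, rfl⟩
  exact evnorm_mulVec_le_frob A x hx

lemma spec_le {n₁ n₂ : ℕ} {A : Matrix (Fin n₁) (Fin n₂) ℝ} {C : ℝ} (hC : 0 ≤ C)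
    (h : ∀ x : Fin n₂ → ℝ, evnorm x ≤ 1 → evnorm (A.mulVec x) ≤ C) : spec A ≤ C :=
  Real.sSup_le (by rintro r ⟨x, hx, rfl⟩; exact h x hx) hC

lemma le_spec {n₁ n₂ : ℕ} (A : Matrix (Fin n₁) (Fin n₂) ℝ) (x : Fin n₂ → ℝ)
    (hx : evnorm x ≤ 1) : evnorm (A.mulVec x) ≤ spec A :=
  le_csSup (spec_bddAbove A) ⟨x, hx, rfl⟩

/-- Key bound: nonnegative entries bounded by `c` with total sum at most `1` give
spectral norm at most `√c`. -/
lemma spec_le_sqrt {n₁ n₂ : ℕ} (A : Matrix (Fin n₁) (Fin n₂) ℝ) (c : ℝ) (hc : 0 ≤ c)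
    (h0 : ∀ i j, 0 ≤ A i j) (h1 : ∀ i j, A i j ≤ c)
    (hsum : ∑ i, ∑ j, A i j ≤ 1) : spec A ≤ Real.sqrt c := by
  apply spec_le (Real.sqrt_nonneg c)
  intro x hx
  set u := A.mulVec x with hu
  set t := ∑ i, (u i) ^ 2 with htdef
  have ht0 : 0 ≤ t := Finset.sum_nonneg fun i _ => sq_nonneg _
  have hx2 := sq_sum_le_one hx
  -- Cauchy-Schwarz over pairs
  have hT : t = ∑ p : Fin n₁ × Fin n₂,
      Real.sqrt (A p.1 p.2) * (Real.sqrt (A p.1 p.2) * (u p.1 * x p.2)) := by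
    rw [Fintype.sum_prod_type, htdef]
    apply Finset.sum_congr rfl
    intro i _
    have hui : u i = ∑ j, A i j * x j := rfl
    calc (u i) ^ 2 = ∑ j, A i j * x j * u i := by rw [sq, hui, Finset.sum_mul]
      _ = ∑ j, Real.sqrt (A i j) * (Real.sqrt (A i j) * (u i * x j)) := by
          apply Finset.sum_congr rfl
          intro j _
          rw [← mul_assoc, Real.mul_self_sqrt (h0 i j)]; ring
  have hCS := Finset.sum_mul_sq_le_sq_mul_sq Finset.univ
      (fun p : Fin n₁ × Fin n₂ => Real.sqrt (A p.1 p.2))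
      (fun p : Fin n₁ × Fin n₂ => Real.sqrt (A p.1 p.2) * (u p.1 * x p.2))
  have hsq1 : ∑ p : Fin n₁ × Fin n₂, (Real.sqrt (A p.1 p.2)) ^ 2 ≤ 1 := by
    calc ∑ p : Fin n₁ × Fin n₂, (Real.sqrt (A p.1 p.2)) ^ 2
        = ∑ p : Fin n₁ × Fin n₂, A p.1 p.2 := by
          apply Finset.sum_congr rfl; intro p _; exact Real.sq_sqrt (h0 p.1 p.2)
      _ = ∑ i, ∑ j, A i j := Fintype.sum_prod_type _
      _ ≤ 1 := hsum
  have hsq2 : ∑ p : Fin n₁ × Fin n₂, (Real.sqrt (A p.1 p.2) * (u p.1 * x p.2)) ^ 2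
      ≤ c * t := by
    calc ∑ p : Fin n₁ × Fin n₂, (Real.sqrt (A p.1 p.2) * (u p.1 * x p.2)) ^ 2
        = ∑ p : Fin n₁ × Fin n₂, A p.1 p.2 * ((u p.1) ^ 2 * (x p.2) ^ 2) := by
          apply Finset.sum_congr rfl
          intro p _
          rw [mul_pow, Real.sq_sqrt (h0 p.1 p.2), mul_pow]
      _ ≤ ∑ p : Fin n₁ × Fin n₂, c * ((u p.1) ^ 2 * (x p.2) ^ 2) := by
          apply Finset.sum_le_sum
          intro p _
          exact mul_le_mul_of_nonneg_right (h1 p.1 p.2)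
            (mul_nonneg (sq_nonneg _) (sq_nonneg _))
      _ = c * ((∑ i, (u i) ^ 2) * (∑ j, (x j) ^ 2)) := by
          rw [← Finset.mul_sum]
          congr 1
          rw [Finset.sum_mul_sum, Fintype.sum_prod_type]
      _ ≤ c * (t * 1) := by
          apply mul_le_mul_of_nonneg_left _ hc
          exact mul_le_mul_of_nonneg_left hx2 ht0
      _ = c * t := by ring
  have hkey : t ^ 2 ≤ c * t := by
    calc t ^ 2 ≤ (∑ p : Fin n₁ × Fin n₂, (Real.sqrt (A p.1 p.2)) ^ 2) *
        (∑ p : Fin n₁ × Fin n₂, (Real.sqrt (A p.1 p.2) * (u p.1 * x p.2)) ^ 2) := by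
          rw [hT]; exact hCS
      _ ≤ 1 * (c * t) := by
          apply mul_le_mul hsq1 hsq2 (Finset.sum_nonneg fun p _ => sq_nonneg _) zero_le_one
      _ = c * t := one_mul _
  have htc : t ≤ c := by
    rcases eq_or_lt_of_le ht0 with h | h
    · rw [← h]; exact hc
    · have : t * t ≤ c * t := by nlinarith
      exact le_of_mul_le_mul_right this h
  have : evnorm (A.mulVec x) = Real.sqrt t := rfl
  rw [this]
  exact Real.sqrt_le_sqrt htc

lemma spec_diagonal_le {n : ℕ} (d : Fin n → ℝ) (C : ℝ) (hC : 0 ≤ C)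
    (h : ∀ i, |d i| ≤ C) : spec (Matrix.diagonal d) ≤ C := by
  apply spec_le hC
  intro x hx
  have hmv : (Matrix.diagonal d).mulVec x = fun i => d i * x i := by
    ext i; simp [Matrix.mulVec_diagonal]
  rw [hmv, evnorm]
  have : ∑ i, (d i * x i) ^ 2 ≤ C ^ 2 * ∑ i, (x i) ^ 2 := by
    rw [Finset.mul_sum]
    apply Finset.sum_le_sum
    intro i _
    rw [mul_pow]
    apply mul_le_mul_of_nonneg_right _ (sq_nonneg _)
    calc (d i) ^ 2 = |d i| ^ 2 := (sq_abs _).symm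
      _ ≤ C ^ 2 := by
          apply pow_le_pow_left₀ (abs_nonneg _) (h i)
  calc Real.sqrt (∑ i, (d i * x i) ^ 2) ≤ Real.sqrt (C ^ 2 * ∑ i, (x i) ^ 2) :=
        Real.sqrt_le_sqrt this
    _ = C * Real.sqrt (∑ i, (x i) ^ 2) := by
        rw [Real.sqrt_mul (sq_nonneg _), Real.sqrt_sq hC]
    _ ≤ C * 1 := mul_le_mul_of_nonneg_left hx hC
    _ = C := mul_one _

lemma le_spec_diagonal {n : ℕ} (d : Fin n → ℝ) (i : Fin n) :
    |d i| ≤ spec (Matrix.diagonal d) := by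
  set v : Fin n → ℝ := Pi.single i 1 with hv
  have hx : evnorm v ≤ 1 := by
    rw [evnorm]
    have : ∑ a, (v a) ^ 2 = 1 := by
      simp [hv, Pi.single_apply, apply_ite (fun x : ℝ => x ^ 2), Finset.sum_ite_eq']
    rw [this, Real.sqrt_one]
  have hle := le_spec (Matrix.diagonal d) v hx
  have hmv : (Matrix.diagonal d).mulVec v = fun a => d a * v a := by
    ext a; simp [Matrix.mulVec_diagonal]
  rw [hmv, evnorm] at hle
  have heq : ∑ a, (d a * v a) ^ 2 = (d i) ^ 2 := by
    simp [hv, Pi.single_apply, mul_ite, apply_ite (fun x : ℝ => x ^ 2), Finset.sum_ite_eq']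
  rw [heq, Real.sqrt_sq_eq_abs] at hle
  exact hle

/-- Equation (5.2): bounds on `‖E(X)‖_∞` and on
`σ_X² = max{‖E(XXᵀ)‖_∞, ‖E(XᵀX)‖_∞}` under Assumption 3. -/
theorem moment_bounds {m₁ m₂ : ℕ} (hm₁ : 0 < m₁) (hm₂ : 0 < m₂)
    (Pdist : Measure (Matrix (Fin m₁) (Fin m₂) ℝ)) [IsProbabilityMeasure Pdist]
    (hsupp : Pdist (mcBasis m₁ m₂) = 1)
    (c₁ c₁' : ℝ) (hc₁ : 0 < c₁) (hc₁₁' : c₁ ≤ c₁')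
    (hκlow : Real.sqrt (c₁ / (m₁ * m₂)) ≤ kappa1Pi Pdist)
    (hκmid : kappa1Pi Pdist ≤ kappa1'Pi Pdist)
    (hκup : kappa1'Pi Pdist ≤ Real.sqrt (c₁' / (m₁ * m₂))) :
    max (spec (mEPi Pdist (fun M => M))) (spec ((mEPi Pdist (fun M => M))ᵀ)) ≤
        Real.sqrt (c₁' / (m₁ * m₂)) ∧
      c₁ / (min m₁ m₂ : ℕ) ≤
        max (spec (mEPi Pdist (fun M => M * Mᵀ))) (spec (mEPi Pdist (fun M => Mᵀ * M))) ∧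
      max (spec (mEPi Pdist (fun M => M * Mᵀ))) (spec (mEPi Pdist (fun M => Mᵀ * M))) ≤
        c₁' / (min m₁ m₂ : ℕ) := by
  have hm₁R : (0:ℝ) < (m₁:ℝ) := Nat.cast_pos.mpr hm₁
  have hm₂R : (0:ℝ) < (m₂:ℝ) := Nat.cast_pos.mpr hm₂
  have hNR : (0:ℝ) < (m₁:ℝ) * (m₂:ℝ) := mul_pos hm₁R hm₂R
  have hc₁' : (0:ℝ) < c₁' := lt_of_lt_of_le hc₁ hc₁₁'
  -- pointwise probability bounds
  have hpe_bound : ∀ (j : Fin m₁) (k : Fin m₂),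
      c₁ / ((m₁:ℝ) * m₂) ≤ pe Pdist j k ∧ pe Pdist j k ≤ c₁' / ((m₁:ℝ) * m₂) := by
    intro j k
    have hmem : Real.sqrt (nl2sqPi Pdist (bm j k)) ∈
        {r | ∃ B : Matrix (Fin m₁) (Fin m₂) ℝ,
          frob B = 1 ∧ B.rank ≤ 1 ∧ r = Real.sqrt (nl2sqPi Pdist B)} :=
      ⟨bm j k, frob_bm j k, rank_bm j k, rfl⟩
    have hBdd : BddBelow {r | ∃ B : Matrix (Fin m₁) (Fin m₂) ℝ,
        frob B = 1 ∧ B.rank ≤ 1 ∧ r = Real.sqrt (nl2sqPi Pdist B)} := by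
      refine ⟨0, ?_⟩
      rintro r ⟨B, _, _, rfl⟩
      exact Real.sqrt_nonneg _
    have hBddA : BddAbove {r | ∃ B : Matrix (Fin m₁) (Fin m₂) ℝ,
        frob B = 1 ∧ B.rank ≤ 1 ∧ r = Real.sqrt (nl2sqPi Pdist B)} := by
      refine ⟨1, ?_⟩
      rintro r ⟨B, hB, _, rfl⟩
      have hle : nl2sqPi Pdist B ≤ 1 := by
        rw [nl2sq_eq Pdist hsupp]
        have h1 : ∑ a, ∑ b, pe Pdist a b * (B a b) ^ 2 ≤ ∑ a, ∑ b, (B a b) ^ 2 := by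
          apply Finset.sum_le_sum; intro a _
          apply Finset.sum_le_sum; intro b _
          calc pe Pdist a b * (B a b) ^ 2 ≤ 1 * (B a b) ^ 2 :=
            mul_le_mul_of_nonneg_right (pe_le_one Pdist a b) (sq_nonneg _)
            _ = (B a b) ^ 2 := one_mul _
        have h2 : ∑ a, ∑ b, (B a b) ^ 2 = 1 := by
          have := hB
          rw [frob] at this
          have h0 : (0:ℝ) ≤ ∑ a, ∑ b, (B a b) ^ 2 :=
            Finset.sum_nonneg fun a _ => Finset.sum_nonneg fun b _ => sq_nonneg _
          nlinarith [Real.sq_sqrt h0]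
        linarith
      calc Real.sqrt (nl2sqPi Pdist B) ≤ Real.sqrt 1 := Real.sqrt_le_sqrt hle
        _ = 1 := Real.sqrt_one
    have hnl : nl2sqPi Pdist (bm j k) = pe Pdist j k := by
      rw [nl2sq_eq Pdist hsupp]
      simp [bm_apply, ite_and, apply_ite (fun x : ℝ => x ^ 2), mul_ite,
        Finset.sum_ite_eq]
    have hlow : Real.sqrt (c₁ / ((m₁:ℝ) * m₂)) ≤ Real.sqrt (pe Pdist j k) := by
      calc Real.sqrt (c₁ / ((m₁:ℝ) * m₂)) ≤ kappa1Pi Pdist := by exact_mod_cast hκlow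
        _ ≤ Real.sqrt (nl2sqPi Pdist (bm j k)) := csInf_le hBdd hmem
        _ = Real.sqrt (pe Pdist j k) := by rw [hnl]
    have hhigh : Real.sqrt (pe Pdist j k) ≤ Real.sqrt (c₁' / ((m₁:ℝ) * m₂)) := by
      calc Real.sqrt (pe Pdist j k) = Real.sqrt (nl2sqPi Pdist (bm j k)) := by rw [hnl]
        _ ≤ kappa1'Pi Pdist := le_csSup hBddA hmem
        _ ≤ Real.sqrt (c₁' / ((m₁:ℝ) * m₂)) := by exact_mod_cast hκup
    constructor
    · have h1 : (0:ℝ) ≤ c₁ / ((m₁:ℝ) * m₂) := le_of_lt (div_pos hc₁ hNR)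
      nlinarith [Real.sq_sqrt h1, Real.sq_sqrt (pe_nonneg Pdist j k),
        Real.sqrt_nonneg (c₁ / ((m₁:ℝ) * m₂)), Real.sqrt_nonneg (pe Pdist j k)]
    · have h1 : (0:ℝ) ≤ c₁' / ((m₁:ℝ) * m₂) := le_of_lt (div_pos hc₁' hNR)
      nlinarith [Real.sq_sqrt h1, Real.sq_sqrt (pe_nonneg Pdist j k),
        Real.sqrt_nonneg (c₁' / ((m₁:ℝ) * m₂)), Real.sqrt_nonneg (pe Pdist j k)]
  -- expectation matrices
  have hmE_id : ∀ i j, mEPi Pdist (fun M => M) i j = pe Pdist i j := by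
    intro i j
    rw [mEPi, integral_eq_sum Pdist hsupp (fun M => M i j)]
    simp [bm_apply, ite_and, mul_ite, Finset.sum_ite_eq, pe]
  have hbmT : ∀ (j : Fin m₁) (k : Fin m₂), (bm j k)ᵀ = Matrix.single k j (1:ℝ) := by
    intro j k
    ext a b
    simp [bm_apply, Matrix.single, Matrix.transpose_apply, Matrix.of_apply, and_comm]
  have hmul1 : ∀ (j : Fin m₁) (k : Fin m₂),
      bm j k * (bm j k)ᵀ = Matrix.single j j (1:ℝ) := by
    intro j k
    rw [hbmT]
    ext a b
    simp only [Matrix.mul_apply, bm_apply, Matrix.single, Matrix.of_apply,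
      ite_and, Finset.sum_ite_eq, mul_ite, mul_one, mul_zero, ite_mul, one_mul, zero_mul]
    by_cases h1 : j = a <;> by_cases h2 : j = b <;> simp [h1, h2]
  have hmul2 : ∀ (j : Fin m₁) (k : Fin m₂),
      (bm j k)ᵀ * bm j k = Matrix.single k k (1:ℝ) := by
    intro j k
    rw [hbmT]
    ext a b
    simp only [Matrix.mul_apply, bm_apply, Matrix.single, Matrix.of_apply,
      ite_and, Finset.sum_ite_eq, mul_ite, mul_one, mul_zero, ite_mul, one_mul, zero_mul]
    by_cases h1 : k = a <;> by_cases h2 : k = b <;> simp [h1, h2]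
  have hmE_DD : mEPi Pdist (fun M => M * Mᵀ) =
      Matrix.diagonal (fun i => ∑ k, pe Pdist i k) := by
    ext a b
    rw [mEPi, integral_eq_sum Pdist hsupp (fun M => (M * Mᵀ) a b)]
    simp only [hmul1]
    by_cases hab : a = b
    · subst hab
      simp [Matrix.single, Matrix.of_apply, Matrix.diagonal_apply_eq, ite_and,
        apply_ite, mul_ite, mul_one, mul_zero, Finset.sum_ite_eq, pe]
    · simp only [Matrix.diagonal_apply_ne _ hab]
      apply Finset.sum_eq_zero
      intro j _
      apply Finset.sum_eq_zero
      intro k _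
      have : Matrix.single j j (1:ℝ) a b = 0 := by
        apply Matrix.single_apply_of_ne
        rintro ⟨rfl, rfl⟩; exact hab rfl
      rw [this, mul_zero]
  have hmE_TT : mEPi Pdist (fun M => Mᵀ * M) =
      Matrix.diagonal (fun k => ∑ j, pe Pdist j k) := by
    ext a b
    rw [mEPi, integral_eq_sum Pdist hsupp (fun M => (Mᵀ * M) a b)]
    simp only [hmul2]
    by_cases hab : a = b
    · subst hab
      rw [Matrix.diagonal_apply_eq]
      apply Finset.sum_congr rfl
      intro j _
      simp [Matrix.single, Matrix.of_apply, ite_and, mul_ite, mul_one, mul_zero,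
        Finset.sum_ite_eq, Finset.sum_ite_eq', pe]
    · simp only [Matrix.diagonal_apply_ne _ hab]
      apply Finset.sum_eq_zero
      intro j _
      apply Finset.sum_eq_zero
      intro k _
      have : Matrix.single k k (1:ℝ) a b = 0 := by
        apply Matrix.single_apply_of_ne
        rintro ⟨rfl, rfl⟩; exact hab rfl
      rw [this, mul_zero]
  -- row and column sums
  have hconst₂ : ∀ c : ℝ, ∑ _k : Fin m₂, c / ((m₁:ℝ) * m₂) = c / (m₁:ℝ) := by
    intro c
    rw [Finset.sum_const, Finset.card_univ, Fintype.card_fin, nsmul_eq_mul]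
    field_simp
  have hconst₁ : ∀ c : ℝ, ∑ _j : Fin m₁, c / ((m₁:ℝ) * m₂) = c / (m₂:ℝ) := by
    intro c
    rw [Finset.sum_const, Finset.card_univ, Fintype.card_fin, nsmul_eq_mul]
    field_simp
  have hrow : ∀ i : Fin m₁, c₁ / (m₁:ℝ) ≤ ∑ k, pe Pdist i k ∧
      ∑ k, pe Pdist i k ≤ c₁' / (m₁:ℝ) := by
    intro i
    constructor
    · rw [← hconst₂ c₁]
      exact Finset.sum_le_sum fun k _ => (hpe_bound i k).1
    · rw [← hconst₂ c₁']
      exact Finset.sum_le_sum fun k _ => (hpe_bound i k).2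
  have hcol : ∀ k : Fin m₂, c₁ / (m₂:ℝ) ≤ ∑ j, pe Pdist j k ∧
      ∑ j, pe Pdist j k ≤ c₁' / (m₂:ℝ) := by
    intro k
    constructor
    · rw [← hconst₁ c₁]
      exact Finset.sum_le_sum fun j _ => (hpe_bound j k).1
    · rw [← hconst₁ c₁']
      exact Finset.sum_le_sum fun j _ => (hpe_bound j k).2
  have hrow_nonneg : ∀ i : Fin m₁, 0 ≤ ∑ k, pe Pdist i k :=
    fun i => Finset.sum_nonneg fun k _ => pe_nonneg Pdist i k
  have hcol_nonneg : ∀ k : Fin m₂, 0 ≤ ∑ j, pe Pdist j k :=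
    fun k => Finset.sum_nonneg fun j _ => pe_nonneg Pdist j k
  have hminR : (0:ℝ) < ((min m₁ m₂ : ℕ) : ℝ) := by
    have : 0 < min m₁ m₂ := lt_min hm₁ hm₂
    exact_mod_cast this
  have hminle₁ : ((min m₁ m₂ : ℕ) : ℝ) ≤ (m₁:ℝ) := by exact_mod_cast min_le_left m₁ m₂
  have hminle₂ : ((min m₁ m₂ : ℕ) : ℝ) ≤ (m₂:ℝ) := by exact_mod_cast min_le_right m₁ m₂
  refine ⟨?_, ?_, ?_⟩
  · -- first moment bound
    have hcN : (0:ℝ) ≤ c₁' / ((m₁:ℝ) * m₂) := le_of_lt (div_pos hc₁' hNR)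
    have hsum_id : ∑ i, ∑ j, mEPi Pdist (fun M => M) i j = 1 := by
      rw [show (∑ i, ∑ j, mEPi Pdist (fun M => M) i j) = ∑ i, ∑ j, pe Pdist i j from
        Finset.sum_congr rfl fun i _ => Finset.sum_congr rfl fun j _ => hmE_id i j,
        sum_pe Pdist hsupp]
    have hsum_idT : ∑ i, ∑ j, (mEPi Pdist (fun M => M))ᵀ i j = 1 := by
      rw [show (∑ i, ∑ j, (mEPi Pdist (fun M => M))ᵀ i j) = ∑ i, ∑ j, pe Pdist j i from
        Finset.sum_congr rfl fun i _ => Finset.sum_congr rfl fun j _ => by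
          rw [Matrix.transpose_apply, hmE_id]]
      rw [Finset.sum_comm, sum_pe Pdist hsupp]
    apply max_le
    · apply spec_le_sqrt _ _ hcN
      · intro i j; rw [hmE_id]; exact pe_nonneg Pdist i j
      · intro i j; rw [hmE_id]; exact (hpe_bound i j).2
      · exact le_of_eq hsum_id
    · apply spec_le_sqrt _ _ hcN
      · intro i j; rw [Matrix.transpose_apply, hmE_id]; exact pe_nonneg Pdist j i
      · intro i j; rw [Matrix.transpose_apply, hmE_id]; exact (hpe_bound j i).2
      · exact le_of_eq hsum_idT
  · -- second moment lower bound
    rcases le_total m₁ m₂ with hmm | hmm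
    · have hmin : min m₁ m₂ = m₁ := min_eq_left hmm
      rw [hmin]
      have i0 : Fin m₁ := ⟨0, hm₁⟩
      calc c₁ / (m₁:ℝ) ≤ ∑ k, pe Pdist i0 k := (hrow i0).1
        _ = |∑ k, pe Pdist i0 k| := (abs_of_nonneg (hrow_nonneg i0)).symm
        _ ≤ spec (Matrix.diagonal (fun i => ∑ k, pe Pdist i k)) :=
            le_spec_diagonal (fun i => ∑ k, pe Pdist i k) i0
        _ = spec (mEPi Pdist (fun M => M * Mᵀ)) := by rw [hmE_DD]
        _ ≤ max (spec (mEPi Pdist (fun M => M * Mᵀ)))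
              (spec (mEPi Pdist (fun M => Mᵀ * M))) := le_max_left _ _
    · have hmin : min m₁ m₂ = m₂ := min_eq_right hmm
      rw [hmin]
      have k0 : Fin m₂ := ⟨0, hm₂⟩
      calc c₁ / (m₂:ℝ) ≤ ∑ j, pe Pdist j k0 := (hcol k0).1
        _ = |∑ j, pe Pdist j k0| := (abs_of_nonneg (hcol_nonneg k0)).symm
        _ ≤ spec (Matrix.diagonal (fun k => ∑ j, pe Pdist j k)) :=
            le_spec_diagonal (fun k => ∑ j, pe Pdist j k) k0
        _ = spec (mEPi Pdist (fun M => Mᵀ * M)) := by rw [hmE_TT]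
        _ ≤ max (spec (mEPi Pdist (fun M => M * Mᵀ)))
              (spec (mEPi Pdist (fun M => Mᵀ * M))) := le_max_right _ _
  · -- second moment upper bound
    have hC : (0:ℝ) ≤ c₁' / ((min m₁ m₂ : ℕ) : ℝ) := le_of_lt (div_pos hc₁' hminR)
    apply max_le
    · rw [hmE_DD]
      apply spec_diagonal_le _ _ hC
      intro i
      rw [abs_of_nonneg (hrow_nonneg i)]
      calc ∑ k, pe Pdist i k ≤ c₁' / (m₁:ℝ) := (hrow i).2
        _ ≤ c₁' / ((min m₁ m₂ : ℕ) : ℝ) :=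
            div_le_div_of_nonneg_left (le_of_lt hc₁') hminR hminle₁
    · rw [hmE_TT]
      apply spec_diagonal_le _ _ hC
      intro k
      rw [abs_of_nonneg (hcol_nonneg k)]
      calc ∑ j, pe Pdist j k ≤ c₁' / (m₂:ℝ) := (hcol k).2
        _ ≤ c₁' / ((min m₁ m₂ : ℕ) : ℝ) :=
            div_le_div_of_nonneg_left (le_of_lt hc₁') hminR hminle₂

end MC
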